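/- Let s ≥ 2 be odd (so 2 divides s - 1), and write ν_2 for the 2-adic valuation. Then ν_2(ord_{2^ℓ}(s)) = 0 if ℓ ≤ ν_2(s-1); ν_2(ord_{2^ℓ}(s)) = 1 if ν_2(s-1) < ℓ ≤ ν_2(s^2-1); and ν_2(ord_{2^ℓ}(s)) = 1 + ℓ - ν_2(s^2-1) if ℓ > ν_2(s^2-1). -/

import Mathlib

private lemma nu_one (u : ℕ) (hu : u % 4 = 2) : padicValNat 2 u = 1 := by
  obtain ⟨k, hk⟩ : ∃ k, u = 2 * (2 * k + 1) := ⟨u / 4, by omega⟩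
  subst hk
  haveI : Fact (Nat.Prime 2) := ⟨Nat.prime_two⟩
  rw [padicValNat.mul (by norm_num) (by omega), padicValNat_self,
    padicValNat.eq_zero_of_not_dvd (by omega)]

private lemma cast_pow_eq_one (s m n : ℕ) (hs : 2 ≤ s) (hm : m ≠ 0) :
    ((s : ZMod m) ^ n = 1) ↔ m ∣ s ^ n - 1 := by
  haveI : NeZero m := ⟨hm⟩
  have h1 : 1 ≤ s ^ n := Nat.one_le_pow _ _ (by omega)
  have : ((s : ZMod m) ^ n) = ((s ^ n - 1 : ℕ) : ZMod m) + 1 := by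
    push_cast [Nat.cast_sub h1]; ring
  rw [this, add_eq_right, ZMod.natCast_eq_zero_iff]

theorem stmt18 (s ℓ : ℕ) (hs : 2 ≤ s) (hodd : Odd s) :
    (ℓ ≤ padicValNat 2 (s - 1) →
      padicValNat 2 (orderOf (s : ZMod (2 ^ ℓ))) = 0) ∧
    (padicValNat 2 (s - 1) < ℓ ∧ ℓ ≤ padicValNat 2 (s ^ 2 - 1) →
      padicValNat 2 (orderOf (s : ZMod (2 ^ ℓ))) = 1) ∧
    (ℓ > padicValNat 2 (s ^ 2 - 1) →
      padicValNat 2 (orderOf (s : ZMod (2 ^ ℓ))) =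
        1 + ℓ - padicValNat 2 (s ^ 2 - 1)) := by
  haveI : Fact (Nat.Prime 2) := ⟨Nat.prime_two⟩
  have hs3 : 3 ≤ s := by rcases hodd with ⟨k, hk⟩; omega
  set a := padicValNat 2 (s - 1) with ha
  set b := padicValNat 2 (s ^ 2 - 1) with hb
  have hmz : (2 : ℕ) ^ ℓ ≠ 0 := pow_ne_zero _ (by norm_num)
  set x : ZMod (2 ^ ℓ) := (s : ZMod (2 ^ ℓ)) with hx
  -- basic decomposition s^2 - 1 = (s-1)(s+1)
  have hsplit : s ^ 2 - 1 = (s - 1) * (s + 1) := by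
    obtain ⟨t, rfl⟩ : ∃ t, s = t + 1 := ⟨s - 1, by omega⟩
    simp [pow_two]; ring_nf; omega
  have hb_eq : b = a + padicValNat 2 (s + 1) := by
    rw [hb, hsplit, padicValNat.mul (by omega) (by omega)]
  have hab : a < b := by
    have : 1 ≤ padicValNat 2 (s + 1) :=
      one_le_padicValNat_of_dvd (by omega) (by rcases hodd with ⟨k, hk⟩; omega)
    omega
  have ha1 : 1 ≤ a := one_le_padicValNat_of_dvd (by omega) (by rcases hodd with ⟨k, hk⟩; omega)
  -- valuation of s^(2^e) - 1
  have hfe : ∀ e, 1 ≤ e → padicValNat 2 (s ^ 2 ^ e - 1) = b + e - 1 := by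
    intro e he
    induction e with
    | zero => omega
    | succ e ih =>
      rcases Nat.eq_or_lt_of_le he with h1 | h1
      · simp [← h1, hb]
      · have he' : 1 ≤ e := by omega
        have hu : s ^ 2 ^ (e + 1) = (s ^ 2 ^ e) ^ 2 := by
          rw [← pow_mul]; ring_nf
        set u := s ^ 2 ^ e with hud
        have hu3 : 3 ≤ u := le_trans hs3 (Nat.le_self_pow (by positivity) s)
        have huodd : Odd u := hodd.pow
        have husplit : u ^ 2 - 1 = (u - 1) * (u + 1) := by
          obtain ⟨t, ht⟩ : ∃ t, u = t + 1 := ⟨u - 1, by omega⟩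
          rw [ht]; simp [pow_two]; ring_nf; omega
        -- u is an odd square since e ≥ 1
        have hmod : u % 4 = 1 := by
          obtain ⟨f, hf⟩ : ∃ f, e = f + 1 := ⟨e - 1, by omega⟩
          have : u = (s ^ 2 ^ f) ^ 2 := by rw [hud, hf, ← pow_mul]; ring_nf
          have hvodd : Odd (s ^ 2 ^ f) := hodd.pow
          obtain ⟨k, hk⟩ := hvodd
          rw [this, hk]; ring_nf; omega
        have hnu1 : padicValNat 2 (u + 1) = 1 := nu_one _ (by omega)
        rw [hu, husplit, padicValNat.mul (by omega) (by omega), hnu1, ih he']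
        omega
  -- membership criterion
  have hcrit : ∀ e, (x ^ 2 ^ e = 1 ↔ 2 ^ ℓ ∣ s ^ 2 ^ e - 1) := fun e =>
    cast_pow_eq_one s (2 ^ ℓ) (2 ^ e) hs hmz
  have hne : ∀ n, 1 ≤ n → s ^ n - 1 ≠ 0 := by
    intro n hn
    have : s ≤ s ^ n := Nat.le_self_pow (by omega) s
    omega
  have hdvd_iff : ∀ e, (x ^ 2 ^ e = 1 ↔ ℓ ≤ padicValNat 2 (s ^ 2 ^ e - 1)) := by
    intro e
    rw [hcrit e, padicValNat_dvd_iff_le (hne _ (Nat.one_le_two_pow))]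
  have hx1 : x = 1 ↔ ℓ ≤ a := by
    have := hdvd_iff 0
    simpa [pow_one] using this
  refine ⟨?_, ?_, ?_⟩
  · intro h
    rw [hx1.mpr h, orderOf_one]
    simp
  · rintro ⟨h1, h2⟩
    have hord : orderOf x = 2 := by
      apply orderOf_eq_prime
      · have := (hdvd_iff 1).mpr (by simpa [hb] using h2)
        simpa using this
      · intro h; exact absurd (hx1.mp h) (by omega)
    rw [hord]; exact padicValNat_self
  · intro h
    set k := ℓ - b + 1 with hk
    have hk2 : 2 ≤ k := by omega
    have h1 : x ^ 2 ^ k = 1 := (hdvd_iff k).mpr (by rw [hfe k (by omega)]; omega)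
    have h2 : x ^ 2 ^ (k - 1) ≠ 1 := by
      intro hc
      have := (hdvd_iff (k - 1)).mp hc
      rw [hfe (k - 1) (by omega)] at this
      omega
    have hord : orderOf x = 2 ^ k := by
      have hdvd : orderOf x ∣ 2 ^ k := orderOf_dvd_of_pow_eq_one h1
      obtain ⟨j, hj, hje⟩ := (Nat.dvd_prime_pow Nat.prime_two).mp hdvd
      rcases Nat.eq_or_lt_of_le hj with rfl | hjlt
      · exact hje
      · exfalso
        apply h2
        apply orderOf_dvd_iff_pow_eq_one.mp
        rw [hje]
        exact pow_dvd_pow 2 (by omega)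
    rw [hord, padicValNat.prime_pow]
    omega
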